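/- For every point q of real projective space ℙ(ℝ^{n+2}) and every 2-plane P ∈ Gr_2(ℝ^{n+2}), the Hausdorff-type distance δ(P, F_q) from P to the set F_q of 2-planes whose projectivization passes through q equals the distance d(q, ℙ(P)) from q to the projective line ℙ(P). -/

import Mathlib

open scoped RealInnerProductSpace

/-- The angle metric on projective space, computed on normalized representatives of lines. -/
noncomputable def projDist {m : ℕ} (x y : EuclideanSpace ℝ (Fin m)) : ℝ :=
  min ‖‖x‖⁻¹ • x - ‖y‖⁻¹ • y‖ ‖‖x‖⁻¹ • x + ‖y‖⁻¹ • y‖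

/-- The set of unit vectors of a subspace `P` (representatives of the points of `ℙ(P)`). -/
def unitSet {m : ℕ} (P : Submodule ℝ (EuclideanSpace ℝ (Fin m))) :
    Set (EuclideanSpace ℝ (Fin m)) :=
  {x | x ∈ P ∧ ‖x‖ = 1}

/-- Distance from a projective point (given by a unit vector `q`) to a set of unit vectors. -/
noncomputable def distToSet {m : ℕ} (q : EuclideanSpace ℝ (Fin m))
    (A : Set (EuclideanSpace ℝ (Fin m))) : ℝ :=
  sInf ((fun x => projDist q x) '' A)

/-- Hausdorff distance between two sets of unit vectors, for the projective metric. -/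
noncomputable def hausDist {m : ℕ} (A B : Set (EuclideanSpace ℝ (Fin m))) : ℝ :=
  max (sSup ((fun a => distToSet a B) '' A)) (sSup ((fun b => distToSet b A) '' B))

/-- The metric `δ` on the Grassmannian `Gr₂(ℝ^m)`: the Hausdorff distance between the
corresponding projective lines. -/
noncomputable def grDist {m : ℕ} (P P' : Submodule ℝ (EuclideanSpace ℝ (Fin m))) : ℝ :=
  hausDist (unitSet P) (unitSet P')

/-- The set `F_q` of 2-planes whose projectivization passes through the point `[q]`. -/
def planesThrough {m : ℕ} (q : EuclideanSpace ℝ (Fin m)) :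
    Set (Submodule ℝ (EuclideanSpace ℝ (Fin m))) :=
  {P | Module.finrank ℝ P = 2 ∧ q ∈ P}

section Aux

variable {m : ℕ}

lemma projDist_nonneg (x y : EuclideanSpace ℝ (Fin m)) : 0 ≤ projDist x y :=
  le_min (norm_nonneg _) (norm_nonneg _)

lemma norm_inv_smul_le_one (x : EuclideanSpace ℝ (Fin m)) : ‖‖x‖⁻¹ • x‖ ≤ 1 := by
  rcases eq_or_ne x 0 with h | h
  · simp [h]
  · rw [norm_smul, Real.norm_eq_abs, abs_inv, abs_norm]
    exact le_of_eq (inv_mul_cancel₀ (norm_ne_zero_iff.2 h))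

lemma projDist_eq {x y : EuclideanSpace ℝ (Fin m)} (hx : ‖x‖ = 1) (hy : ‖y‖ = 1) :
    projDist x y = min ‖x - y‖ ‖x + y‖ := by
  simp [projDist, hx, hy]

lemma projDist_self {x : EuclideanSpace ℝ (Fin m)} (hx : ‖x‖ = 1) : projDist x x = 0 := by
  rw [projDist_eq hx hx]
  simp [min_eq_left, norm_nonneg]

lemma projDist_le_sqrt_two (x y : EuclideanSpace ℝ (Fin m)) :
    projDist x y ≤ Real.sqrt 2 := by
  set a := ‖x‖⁻¹ • x with ha
  set b := ‖y‖⁻¹ • y with hb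
  have hna : ‖a‖ ≤ 1 := norm_inv_smul_le_one x
  have hnb : ‖b‖ ≤ 1 := norm_inv_smul_le_one y
  have hpar : ‖a - b‖ ^ 2 + ‖a + b‖ ^ 2 = 2 * ‖a‖ ^ 2 + 2 * ‖b‖ ^ 2 := by
    have h1 := norm_add_sq_real a b
    have h2 := norm_sub_sq_real a b
    linarith
  rw [Real.le_sqrt (projDist_nonneg x y) (by norm_num)]
  have h1 : projDist x y ^ 2 ≤ ‖a - b‖ ^ 2 :=
    pow_le_pow_left₀ (projDist_nonneg x y) (min_le_left _ _) 2
  have h2 : projDist x y ^ 2 ≤ ‖a + b‖ ^ 2 :=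
    pow_le_pow_left₀ (projDist_nonneg x y) (min_le_right _ _) 2
  nlinarith [norm_nonneg a, norm_nonneg b]

lemma bddBelow_projDist_image (q : EuclideanSpace ℝ (Fin m))
    (A : Set (EuclideanSpace ℝ (Fin m))) :
    BddBelow ((fun x => projDist q x) '' A) := by
  refine ⟨0, fun r hr => ?_⟩
  obtain ⟨x, -, rfl⟩ := hr
  exact projDist_nonneg q x

lemma distToSet_nonneg (q : EuclideanSpace ℝ (Fin m))
    (A : Set (EuclideanSpace ℝ (Fin m))) : 0 ≤ distToSet q A := by
  apply Real.sInf_nonneg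
  rintro r ⟨x, -, rfl⟩
  exact projDist_nonneg q x

lemma distToSet_le (q : EuclideanSpace ℝ (Fin m))
    {A : Set (EuclideanSpace ℝ (Fin m))} {a : EuclideanSpace ℝ (Fin m)} (ha : a ∈ A) :
    distToSet q A ≤ projDist q a :=
  csInf_le (bddBelow_projDist_image q A) ⟨a, ha, rfl⟩

lemma distToSet_le_sqrt_two (q : EuclideanSpace ℝ (Fin m))
    (A : Set (EuclideanSpace ℝ (Fin m))) : distToSet q A ≤ Real.sqrt 2 := by
  rcases A.eq_empty_or_nonempty with rfl | ⟨a, ha⟩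
  · simp [distToSet, Real.sInf_empty, Real.sqrt_nonneg]
  · exact (distToSet_le q ha).trans (projDist_le_sqrt_two q a)

lemma grDist_nonneg (P P' : Submodule ℝ (EuclideanSpace ℝ (Fin m))) :
    0 ≤ grDist P P' := by
  refine le_max_iff.2 (Or.inl ?_)
  apply Real.sSup_nonneg
  rintro r ⟨x, -, rfl⟩
  exact distToSet_nonneg _ _

lemma grDist_le_sqrt_two (P P' : Submodule ℝ (EuclideanSpace ℝ (Fin m))) :
    grDist P P' ≤ Real.sqrt 2 := by
  refine max_le ?_ ?_ <;>
  · refine Real.sSup_le ?_ (Real.sqrt_nonneg 2)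
    rintro r ⟨x, -, rfl⟩
    exact distToSet_le_sqrt_two _ _

lemma distToSet_le_grDist {P P' : Submodule ℝ (EuclideanSpace ℝ (Fin m))}
    {q : EuclideanSpace ℝ (Fin m)} (hq : q ∈ unitSet P') :
    distToSet q (unitSet P) ≤ grDist P P' := by
  refine le_trans ?_ (le_max_right _ _)
  apply le_csSup
  · refine ⟨Real.sqrt 2, ?_⟩
    rintro r ⟨x, -, rfl⟩
    exact distToSet_le_sqrt_two _ _
  · exact ⟨q, hq, rfl⟩

lemma norm_comb_sq {e₁ e₂ : EuclideanSpace ℝ (Fin m)} (h1 : ‖e₁‖ = 1) (h2 : ‖e₂‖ = 1)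
    (h12 : ⟪e₁, e₂⟫ = 0) (a b : ℝ) : ‖a • e₁ + b • e₂‖ ^ 2 = a ^ 2 + b ^ 2 := by
  have := norm_add_sq_real (a • e₁) (b • e₂)
  rw [norm_smul, norm_smul, inner_smul_left, inner_smul_right] at this
  simp only [RCLike.star_def, starRingEnd_apply, star_trivial] at this
  rw [h12, h1, h2] at this
  simp only [Real.norm_eq_abs, mul_one, mul_zero] at this
  rw [this, sq_abs, sq_abs]; ring

lemma mem_unitSet_span_pair {e₁ e₂ : EuclideanSpace ℝ (Fin m)} (h1 : ‖e₁‖ = 1)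
    (h2 : ‖e₂‖ = 1) (h12 : ⟪e₁, e₂⟫ = 0) (x : EuclideanSpace ℝ (Fin m)) :
    x ∈ unitSet (Submodule.span ℝ {e₁, e₂}) ↔
      ∃ a b : ℝ, a ^ 2 + b ^ 2 = 1 ∧ x = a • e₁ + b • e₂ := by
  constructor
  · rintro ⟨hx, hnx⟩
    obtain ⟨a, b, rfl⟩ := Submodule.mem_span_pair.1 hx
    refine ⟨a, b, ?_, rfl⟩
    have h := norm_comb_sq h1 h2 h12 a b
    rw [hnx] at h; linarith
  · rintro ⟨a, b, hab, rfl⟩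
    refine ⟨Submodule.mem_span_pair.2 ⟨a, b, rfl⟩, ?_⟩
    have h := norm_comb_sq h1 h2 h12 a b
    rw [hab] at h
    nlinarith [norm_nonneg (a • e₁ + b • e₂)]

lemma li_pair {e₁ e₂ : EuclideanSpace ℝ (Fin m)} (h1 : ‖e₁‖ = 1) (h2 : ‖e₂‖ = 1)
    (h12 : ⟪e₁, e₂⟫ = 0) : LinearIndependent ℝ ![e₁, e₂] := by
  rw [LinearIndependent.pair_iff]
  intro s t hst
  have h := norm_comb_sq h1 h2 h12 s t
  rw [hst] at h
  simp at h
  constructor <;> nlinarith [sq_nonneg s, sq_nonneg t]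

lemma finrank_span_pair {e₁ e₂ : EuclideanSpace ℝ (Fin m)} (h1 : ‖e₁‖ = 1) (h2 : ‖e₂‖ = 1)
    (h12 : ⟪e₁, e₂⟫ = 0) :
    Module.finrank ℝ (Submodule.span ℝ {e₁, e₂}) = 2 := by
  have hr : Set.range ![e₁, e₂] = {e₁, e₂} := by
    simp [Matrix.range_cons, Matrix.range_empty, Set.pair_comm]
  have := finrank_span_eq_card (li_pair h1 h2 h12)
  rw [hr] at this
  simpa using this

/-- Key pointwise bound: each point of the circle of `span{e₁,e₂}` is within
`‖e₁ - f₁‖` of the circle of `span{f₁,e₂}`. -/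
lemma key {e₁ e₂ f₁ : EuclideanSpace ℝ (Fin m)} (h1 : ‖e₁‖ = 1) (h2 : ‖e₂‖ = 1)
    (h12 : ⟪e₁, e₂⟫ = 0) (hf1 : ‖f₁‖ = 1) (hf12 : ⟪f₁, e₂⟫ = 0)
    {x : EuclideanSpace ℝ (Fin m)} (hx : x ∈ unitSet (Submodule.span ℝ {e₁, e₂})) :
    distToSet x (unitSet (Submodule.span ℝ {f₁, e₂})) ≤ ‖e₁ - f₁‖ := by
  obtain ⟨a, b, hab, rfl⟩ := (mem_unitSet_span_pair h1 h2 h12 x).1 hx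
  have hy : (a • f₁ + b • e₂) ∈ unitSet (Submodule.span ℝ {f₁, e₂}) :=
    (mem_unitSet_span_pair hf1 h2 hf12 _).2 ⟨a, b, hab, rfl⟩
  refine (distToSet_le _ hy).trans ?_
  have hnx : ‖a • e₁ + b • e₂‖ = 1 := hx.2
  have hny : ‖a • f₁ + b • e₂‖ = 1 := hy.2
  rw [projDist_eq hnx hny]
  refine (min_le_left _ _).trans ?_
  have hd : a • e₁ + b • e₂ - (a • f₁ + b • e₂) = a • (e₁ - f₁) := by
    rw [smul_sub]; abel
  rw [hd, norm_smul, Real.norm_eq_abs]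
  have ha : |a| ≤ 1 := by
    rw [abs_le]
    constructor <;> nlinarith [sq_nonneg b]
  exact mul_le_of_le_one_left (norm_nonneg _) ha

/-- A nonzero subspace contains a unit vector. -/
lemma exists_unit_of_ne_bot {P : Submodule ℝ (EuclideanSpace ℝ (Fin m))} (hP : P ≠ ⊥) :
    ∃ v, v ∈ P ∧ ‖v‖ = 1 := by
  obtain ⟨v, hv, hv0⟩ := Submodule.exists_mem_ne_zero_of_ne_bot hP
  refine ⟨‖v‖⁻¹ • v, P.smul_mem _ hv, ?_⟩
  rw [norm_smul, Real.norm_eq_abs, abs_inv, abs_norm]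
  exact inv_mul_cancel₀ (norm_ne_zero_iff.2 hv0)

/-- In a 2-plane, every unit vector admits an orthogonal unit partner. -/
lemma exists_unit_orthogonal {P : Submodule ℝ (EuclideanSpace ℝ (Fin m))}
    (hP : Module.finrank ℝ P = 2) {p : EuclideanSpace ℝ (Fin m)} (hp : p ∈ P)
    (hp1 : ‖p‖ = 1) : ∃ w, w ∈ P ∧ ‖w‖ = 1 ∧ ⟪p, w⟫ = 0 := by
  have hp0 : p ≠ 0 := by intro h; rw [h, norm_zero] at hp1; norm_num at hp1
  have hle : Submodule.span ℝ {p} ≤ P := by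
    rw [Submodule.span_singleton_le_iff_mem]; exact hp
  have hrk := Submodule.finrank_add_inf_finrank_orthogonal (𝕜 := ℝ) hle
  rw [finrank_span_singleton hp0, hP] at hrk
  have hne : (Submodule.span ℝ {p})ᗮ ⊓ P ≠ ⊥ := by
    intro h
    rw [h] at hrk
    simp [finrank_bot] at hrk
  obtain ⟨w, hw, hw1⟩ := exists_unit_of_ne_bot hne
  refine ⟨w, hw.2, hw1, ?_⟩
  exact (Submodule.mem_orthogonal _ _).1 hw.1 p (Submodule.mem_span_singleton_self p)

/-- There is always some 2-plane through a given unit vector (in dimension `n+2`). -/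
lemma planesThrough_nonempty {n : ℕ} {q : EuclideanSpace ℝ (Fin (n + 2))} (hq : ‖q‖ = 1) :
    ∃ P₀, P₀ ∈ planesThrough q := by
  have hq0 : q ≠ 0 := by intro h; rw [h, norm_zero] at hq; norm_num at hq
  have hrk := Submodule.finrank_add_finrank_orthogonal (𝕜 := ℝ) (Submodule.span ℝ {q})
  rw [finrank_span_singleton hq0, finrank_euclideanSpace_fin] at hrk
  have hne : (Submodule.span ℝ {q})ᗮ ≠ ⊥ := by
    intro h
    rw [h] at hrk
    simp [finrank_bot] at hrk
  obtain ⟨v, hv, hv1⟩ := exists_unit_of_ne_bot hne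
  have hqv : ⟪q, v⟫ = 0 :=
    (Submodule.mem_orthogonal _ _).1 hv q (Submodule.mem_span_singleton_self q)
  refine ⟨Submodule.span ℝ {q, v}, finrank_span_pair hq hv1 hqv, ?_⟩
  exact Submodule.subset_span (Set.mem_insert q {v})

end Aux

/-- For every point `q` of projective space `ℙ(ℝ^{n+2})` (represented by
a unit vector) and every 2-plane `P`, the distance `δ(P, F_q) = inf_{P' ∈ F_q} δ(P,P')`
equals the distance `d(q, ℙ(P))` from `q` to the projective line `ℙ(P)`. -/
theorem stmt_8 (n : ℕ) (q : EuclideanSpace ℝ (Fin (n + 2))) (hq : ‖q‖ = 1)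
    (P : Submodule ℝ (EuclideanSpace ℝ (Fin (n + 2)))) (hP : Module.finrank ℝ P = 2) :
    sInf ((fun P' => grDist P P') '' planesThrough q) = distToSet q (unitSet P) := by
  classical
  have hPbot : P ≠ ⊥ := by
    intro h
    rw [h, finrank_bot] at hP
    norm_num at hP
  obtain ⟨x₀, hx₀P, hx₀1⟩ := exists_unit_of_ne_bot hPbot
  have hx₀ : x₀ ∈ unitSet P := ⟨hx₀P, hx₀1⟩
  obtain ⟨Pw, hPw⟩ := planesThrough_nonempty hq
  have himg_ne : ((fun P' => grDist P P') '' planesThrough q).Nonempty := ⟨_, Pw, hPw, rfl⟩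
  have hbdd : BddBelow ((fun P' => grDist P P') '' planesThrough q) := by
    refine ⟨0, ?_⟩
    rintro r ⟨P', -, rfl⟩
    exact grDist_nonneg _ _
  have hlow : distToSet q (unitSet P) ≤ sInf ((fun P' => grDist P P') '' planesThrough q) := by
    refine le_csInf himg_ne ?_
    rintro r ⟨P', hP', rfl⟩
    exact distToSet_le_grDist ⟨hP'.2, hq⟩
  refine le_antisymm ?_ hlow
  suffices h : ∃ P₀ ∈ planesThrough q, grDist P P₀ ≤ distToSet q (unitSet P) by
    obtain ⟨P₀, h₀, hle⟩ := h
    exact le_trans (csInf_le hbdd ⟨P₀, h₀, rfl⟩) hle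
  by_cases hqP : q ∈ P
  · refine ⟨P, ⟨hP, hqP⟩, ?_⟩
    have hgr : grDist P P ≤ 0 := by
      refine max_le ?_ ?_ <;>
      · refine Real.sSup_le ?_ le_rfl
        rintro r ⟨a, ha, rfl⟩
        exact (distToSet_le _ ha).trans (le_of_eq (projDist_self ha.2))
    exact hgr.trans (distToSet_nonneg _ _)
  · set π : EuclideanSpace ℝ (Fin (n + 2)) := ↑(Submodule.orthogonalProjectionOnto P q) with hπdef
    have hπP : π ∈ P := SetLike.coe_mem _
    have hr : q - π ∈ Pᗮ := P.sub_starProjection_mem_orthogonal q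
    have hinner_eq : ∀ x ∈ P, ⟪q, x⟫ = ⟪π, x⟫ := by
      intro x hx
      have h0 : ⟪x, q - π⟫ = 0 := (Submodule.mem_orthogonal _ _).1 hr x hx
      have h1 : ⟪q - π, x⟫ = 0 := by rw [real_inner_comm]; exact h0
      rw [inner_sub_left] at h1
      linarith
    clear_value π
    by_cases hπ0 : π = 0
    · refine ⟨Pw, hPw, ?_⟩
      have hd : Real.sqrt 2 ≤ distToSet q (unitSet P) := by
        refine le_csInf ⟨projDist q x₀, x₀, hx₀, rfl⟩ ?_
        rintro r ⟨x, hx, rfl⟩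
        show Real.sqrt 2 ≤ projDist q x
        have hqx : ⟪q, x⟫ = 0 := by
          rw [hinner_eq x hx.1, hπ0, inner_zero_left]
        have hs : ‖q - x‖ = Real.sqrt 2 := by
          have h2 := norm_sub_sq_real q x
          rw [hq, hx.2, hqx] at h2
          rw [← Real.sqrt_sq (norm_nonneg (q - x)), h2]
          norm_num
        have ha : ‖q + x‖ = Real.sqrt 2 := by
          have h2 := norm_add_sq_real q x
          rw [hq, hx.2, hqx] at h2
          rw [← Real.sqrt_sq (norm_nonneg (q + x)), h2]
          norm_num
        rw [projDist_eq hq hx.2, hs, ha, min_self]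
      exact (grDist_le_sqrt_two _ _).trans hd
    · obtain ⟨c, hc0, p, hpP, hp1, hqp, hπp⟩ :
          ∃ c : ℝ, 0 < c ∧ ∃ p, p ∈ P ∧ ‖p‖ = 1 ∧ ⟪q, p⟫ = c ∧ π = c • p := by
        have hc0 : (0 : ℝ) < ‖π‖ := norm_pos_iff.2 hπ0
        refine ⟨‖π‖, hc0, ‖π‖⁻¹ • π, P.smul_mem _ hπP, ?_, ?_, ?_⟩
        · rw [norm_smul, Real.norm_eq_abs, abs_inv, abs_norm]
          exact inv_mul_cancel₀ hc0.ne'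
        · rw [hinner_eq _ (P.smul_mem _ hπP), real_inner_smul_right,
            real_inner_self_eq_norm_sq]
          field_simp
        · rw [smul_smul, mul_inv_cancel₀ hc0.ne', one_smul]
      obtain ⟨w, hwP, hw1, hpw⟩ := exists_unit_orthogonal hP hpP hp1
      have hqw : ⟪q, w⟫ = 0 := by
        rw [hinner_eq w hwP, hπp, real_inner_smul_left, hpw, mul_zero]
      have hPeq : P = Submodule.span ℝ {p, w} := by
        refine (Submodule.eq_of_le_of_finrank_eq ?_ ?_).symm
        · rw [Submodule.span_le]
          rintro y hy
          rcases hy with rfl | hy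
          · exact hpP
          · rw [Set.mem_singleton_iff] at hy
            subst hy
            exact hwP
        · rw [finrank_span_pair hp1 hw1 hpw, hP]
      refine ⟨Submodule.span ℝ {q, w},
        ⟨finrank_span_pair hq hw1 hqw, Submodule.subset_span (Set.mem_insert q {w})⟩, ?_⟩
      have hkey : ‖q - p‖ ≤ distToSet q (unitSet P) := by
        refine le_csInf ⟨projDist q x₀, x₀, hx₀, rfl⟩ ?_
        rintro r ⟨x, hx, rfl⟩
        have hx' := hx
        rw [hPeq] at hx'
        obtain ⟨a, b, hab, hxeq⟩ := (mem_unitSet_span_pair hp1 hw1 hpw x).1 hx'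
        show ‖q - p‖ ≤ projDist q x
        have hqx : ⟪q, x⟫ = a * c := by
          rw [hxeq, inner_add_right, real_inner_smul_right, real_inner_smul_right, hqp, hqw]
          ring
        have ha1 : |a| ≤ 1 := by
          rw [abs_le]; constructor <;> nlinarith [sq_nonneg b]
        have e0 : ‖q - p‖ ^ 2 = 2 - 2 * c := by
          have h2 := norm_sub_sq_real q p
          rw [hq, hp1, hqp] at h2
          rw [h2]; ring
        have e1 : ‖q - x‖ ^ 2 = 2 - 2 * (a * c) := by
          have h2 := norm_sub_sq_real q x
          rw [hq, hx.2, hqx] at h2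
          rw [h2]; ring
        have e2 : ‖q + x‖ ^ 2 = 2 + 2 * (a * c) := by
          have h2 := norm_add_sq_real q x
          rw [hq, hx.2, hqx] at h2
          rw [h2]; ring
        rw [projDist_eq hq hx.2]
        clear hlow hbdd himg_ne hinner_eq hr hx hx' hπdef
        have hamc : a * c ≤ c := by nlinarith [abs_le.1 ha1]
        have hamc' : -c ≤ a * c := by nlinarith [abs_le.1 ha1]
        refine le_min ?_ ?_
        · have hsq : ‖q - p‖ ^ 2 ≤ ‖q - x‖ ^ 2 := by rw [e0, e1]; linarith
          have h := Real.sqrt_le_sqrt hsq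
          rwa [Real.sqrt_sq (norm_nonneg _), Real.sqrt_sq (norm_nonneg _)] at h
        · have hsq : ‖q - p‖ ^ 2 ≤ ‖q + x‖ ^ 2 := by rw [e0, e2]; linarith
          have h := Real.sqrt_le_sqrt hsq
          rwa [Real.sqrt_sq (norm_nonneg _), Real.sqrt_sq (norm_nonneg _)] at h
      have hgr : grDist P (Submodule.span ℝ {q, w}) ≤ ‖q - p‖ := by
        rw [grDist, hausDist, hPeq]
        refine max_le ?_ ?_
        · refine Real.sSup_le ?_ (norm_nonneg _)
          rintro r ⟨x, hx, rfl⟩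
          have := key hp1 hw1 hpw hq hqw hx
          rwa [norm_sub_rev] at this
        · refine Real.sSup_le ?_ (norm_nonneg _)
          rintro r ⟨x, hx, rfl⟩
          exact key hq hw1 hqw hp1 hpw hx
      exact hgr.trans hkey
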